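/- arXiv:2503.00446 — 2 statements merged into one kernel-verified Lean document; each statement's English description precedes it below -/
import Mathlib

section
/- Let g : ℝ^n_{≥0} → ℝ be a function whose partial derivatives ∂g/∂R_k exist and are continuous on ℝ^n_{≥0} (one-sided at boundary points), such that g(R) = 0 whenever R_j = 0, and such that ∂g/∂R_k(R) = 0 whenever R_k = 0 for each k ≠ j. Then the function f̂ : ℝ^n → ℝ defined by f̂(u) = sign(u_j) · g(|u_1|, ..., |u_n|) is C^1 on ℝ^n. -/
open Set Asymptotics Filter


lemma sign_abs_le_one (x : ℝ) : |Real.sign x| ≤ 1 := by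
  rcases lt_trichotomy x 0 with h | h | h
  · simp [Real.sign_of_neg h]
  · simp [h]
  · simp [Real.sign_of_pos h]

lemma sign_mul_abs' (t : ℝ) : Real.sign t * |t| = t := by
  rcases lt_trichotomy t 0 with h | h | h
  · rw [Real.sign_of_neg h, abs_of_neg h]; ring
  · simp [h]
  · rw [Real.sign_of_pos h, abs_of_pos h]; ring

lemma tendsto_abs_nhdsWithin_Ici : Filter.Tendsto (fun t : ℝ => |t|) (nhds 0) (nhdsWithin 0 (Ici 0)) := by
  apply tendsto_nhdsWithin_of_tendsto_nhds_of_eventually_within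
  · simpa using continuous_abs.tendsto (0 : ℝ)
  · exact Filter.Eventually.of_forall fun t => abs_nonneg t

/-- Odd reflection: if `φ` has one-sided derivative `d` at `0` and `φ 0 = 0`, then
`t ↦ sign t * φ |t|` has derivative `d` at `0`. -/
lemma hasDerivAt_sign_mul_comp_abs {φ : ℝ → ℝ} {d : ℝ}
    (h : HasDerivWithinAt φ d (Ici 0) 0) (h0 : φ 0 = 0) :
    HasDerivAt (fun t => Real.sign t * φ |t|) d 0 := by
  rw [hasDerivAt_iff_isLittleO]
  rw [hasDerivWithinAt_iff_isLittleO] at h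
  have h2 : ((fun s => φ s - φ 0 - (s - 0) • d) ∘ (fun t : ℝ => |t|)) =o[nhds 0]
      ((fun s : ℝ => s - 0) ∘ (fun t : ℝ => |t|)) := h.comp_tendsto tendsto_abs_nhdsWithin_Ici
  have h3 : (fun t : ℝ => φ |t| - |t| * d) =o[nhds 0] (fun t : ℝ => |t|) := by
    simpa [h0, Function.comp_def, smul_eq_mul] using h2
  have h4 : (fun t : ℝ => |t|) =O[nhds (0:ℝ)] (fun t : ℝ => t) :=
    Asymptotics.IsBigO.of_bound 1 (Filter.Eventually.of_forall fun t => by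
      simp [Real.norm_eq_abs, abs_abs])
  have h5 : (fun t : ℝ => φ |t| - |t| * d) =o[nhds 0] (fun t : ℝ => t) := h3.trans_isBigO h4
  have h6 : (fun t : ℝ => Real.sign t * (φ |t| - |t| * d)) =O[nhds 0]
      (fun t : ℝ => φ |t| - |t| * d) :=
    Asymptotics.IsBigO.of_bound 1 (Filter.Eventually.of_forall fun t => by
      rw [Real.norm_eq_abs, Real.norm_eq_abs, abs_mul, one_mul]
      exact mul_le_of_le_one_left (abs_nonneg _) (sign_abs_le_one t))
  have h7 := h6.trans_isLittleO h5
  have heq : (fun t : ℝ => Real.sign t * φ |t| - Real.sign 0 * φ |(0:ℝ)| - (t - 0) • d)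
      = (fun t : ℝ => Real.sign t * (φ |t| - |t| * d)) := by
    funext t
    simp only [Real.sign_zero, abs_zero, h0, smul_eq_mul]
    rw [mul_sub, show Real.sign t * (|t| * d) = (Real.sign t * |t|) * d by ring, sign_mul_abs' t]
    ring
  rw [heq]
  simpa using h7

/-- Even composition: if `φ` has one-sided derivative `0` at `0`, then
`t ↦ φ |t|` has derivative `0` at `0`. -/
lemma hasDerivAt_comp_abs {φ : ℝ → ℝ}
    (h : HasDerivWithinAt φ 0 (Ici 0) 0) :
    HasDerivAt (fun t => φ |t|) 0 0 := by
  rw [hasDerivAt_iff_isLittleO]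
  rw [hasDerivWithinAt_iff_isLittleO] at h
  have h2 : ((fun s => φ s - φ 0 - (s - 0) • (0:ℝ)) ∘ (fun t : ℝ => |t|)) =o[nhds 0]
      ((fun s : ℝ => s - 0) ∘ (fun t : ℝ => |t|)) := h.comp_tendsto tendsto_abs_nhdsWithin_Ici
  have h3 : (fun t : ℝ => φ |t| - φ 0) =o[nhds 0] (fun t : ℝ => |t|) := by
    simpa [Function.comp_def, smul_eq_mul] using h2
  have h4 : (fun t : ℝ => |t|) =O[nhds (0:ℝ)] (fun t : ℝ => t) :=
    Asymptotics.IsBigO.of_bound 1 (Filter.Eventually.of_forall fun t => by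
      simp [Real.norm_eq_abs, abs_abs])
  have h5 := h3.trans_isBigO h4
  simpa [smul_eq_mul] using h5

lemma contDiff_one_of_partials {n : ℕ} (F : (Fin n → ℝ) → ℝ)
    (q : Fin n → (Fin n → ℝ) → ℝ)
    (hd : ∀ k u, HasDerivAt (fun t => F (Function.update u k t)) (q k u) (u k))
    (hq : ∀ k, Continuous (q k)) : ContDiff ℝ 1 F := by
  set L : (Fin n → ℝ) → ((Fin n → ℝ) →L[ℝ] ℝ) :=
    fun x => ∑ k, q k x • ContinuousLinearMap.proj k with hLdef
  have hLapp : ∀ x v, L x v = ∑ k, q k x * v k := by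
    intro x v
    simp [hLdef, ContinuousLinearMap.sum_apply]
  have hLcont : Continuous L := by
    apply continuous_finset_sum
    intro k _
    exact (hq k).smul continuous_const
  have key : ∀ x₀, HasFDerivAt F (L x₀) x₀ := by
    intro x₀
    rw [hasFDerivAt_iff_isLittleO, isLittleO_iff]
    intro c hc
    have hε : (0:ℝ) < c / (n + 1) := by positivity
    set ε := c / (n+1) with hεdef
    have hev : ∀ᶠ u in nhds x₀, ∀ k, dist (q k u) (q k x₀) ≤ ε := by
      rw [eventually_all]
      intro k
      have := (hq k).continuousAt (x := x₀)
      exact this (Metric.closedBall_mem_nhds _ hε)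
    obtain ⟨δ, hδ, hball⟩ := Metric.eventually_nhds_iff.1 hev
    have hmem : Metric.ball x₀ δ ∈ nhds x₀ := Metric.ball_mem_nhds _ hδ
    filter_upwards [hmem] with y hy
    -- telescoping points
    set z : ℕ → (Fin n → ℝ) := fun i k => if (k : ℕ) < i then y k else x₀ k with hzdef
    have hz0 : z 0 = x₀ := by funext k; simp [hzdef]
    have hzn : z n = y := by funext k; simp [hzdef, k.isLt]
    have htel : F y - F x₀ = ∑ i ∈ Finset.range n, (F (z (i+1)) - F (z i)) := by
      rw [Finset.sum_range_sub (fun i => F (z i)) n, hz0, hzn]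
    have hLsum : L x₀ (y - x₀) = ∑ i ∈ Finset.range n,
        (fun i : ℕ => if h : i < n then q ⟨i, h⟩ x₀ * (y ⟨i, h⟩ - x₀ ⟨i, h⟩) else 0) i := by
      rw [hLapp]
      rw [← Fin.sum_univ_eq_sum_range]
      apply Finset.sum_congr rfl
      intro k _
      simp [k.isLt, Pi.sub_apply]
    have hterm : ∀ i ∈ Finset.range n, ∀ h : i < n,
        ‖F (z (i+1)) - F (z i) - q ⟨i, h⟩ x₀ * (y ⟨i, h⟩ - x₀ ⟨i, h⟩)‖ ≤ ε * ‖y - x₀‖ := by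
      intro i hi h
      set ι : Fin n := ⟨i, h⟩ with hιdef
      have hz1 : z (i+1) = Function.update (z i) ι (y ι) := by
        funext k
        rcases eq_or_ne k ι with rfl | hk
        · simp [hzdef, hιdef]
        · have hne : (k : ℕ) ≠ i := fun hh => hk (Fin.ext hh)
          have hiff : ((k:ℕ) < i+1) ↔ ((k:ℕ) < i) := by omega
          simp [hzdef, Function.update_of_ne hk, hiff]
      have hz2 : z i = Function.update (z i) ι (x₀ ι) := by
        funext k
        rcases eq_or_ne k ι with rfl | hk
        · simp [hzdef, hιdef]
        · simp [Function.update_of_ne hk]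
      -- points in segment are close to x₀
      have hclose : ∀ t ∈ uIcc (x₀ ι) (y ι), dist (Function.update (z i) ι t) x₀ < δ := by
        intro t ht
        have h1 : dist (Function.update (z i) ι t) x₀ ≤ dist y x₀ := by
          rw [dist_pi_le_iff dist_nonneg]
          intro k
          rcases eq_or_ne k ι with rfl | hk
          · simp only [Function.update_self]
            calc dist t (x₀ ι) ≤ dist (y ι) (x₀ ι) := by
                  rw [dist_comm t (x₀ ι), dist_comm (y ι) (x₀ ι)]
                  exact Real.dist_left_le_of_mem_uIcc ht
              _ ≤ dist y x₀ := dist_le_pi_dist y x₀ ι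
          · rw [Function.update_of_ne hk]
            by_cases hki : (k : ℕ) < i
            · simp only [hzdef, if_pos hki]
              exact dist_le_pi_dist y x₀ k
            · simp [hzdef, if_neg hki, dist_self, dist_nonneg]
        exact lt_of_le_of_lt h1 hy
      -- MVT-type bound
      have hmvt : ‖(F (Function.update (z i) ι (y ι)) - q ι x₀ * (y ι)) -
          (F (Function.update (z i) ι (x₀ ι)) - q ι x₀ * (x₀ ι))‖ ≤ ε * ‖y ι - x₀ ι‖ := by
        apply Convex.norm_image_sub_le_of_norm_hasDerivWithin_le
          (f := fun t => F (Function.update (z i) ι t) - q ι x₀ * t)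
          (f' := fun t => q ι (Function.update (z i) ι t) - q ι x₀)
          (s := uIcc (x₀ ι) (y ι))
        · intro t ht
          have h1 : HasDerivAt (fun s => F (Function.update (z i) ι s))
              (q ι (Function.update (z i) ι t)) t := by
            have := hd ι (Function.update (z i) ι t)
            simp only [Function.update_idem, Function.update_self] at this
            exact this
          have h2 : HasDerivAt (fun s : ℝ => q ι x₀ * s) (q ι x₀) t := by
            simpa using (hasDerivAt_id t).const_mul (q ι x₀)
          exact (h1.sub h2).hasDerivWithinAt
        · intro t ht
          have := hball (hclose t ht)
          have h2 := this ι
          rwa [Real.dist_eq, ← Real.norm_eq_abs] at h2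
        · exact convex_uIcc _ _
        · exact left_mem_uIcc
        · exact right_mem_uIcc
      rw [← hz1, ← hz2] at hmvt
      calc ‖F (z (i+1)) - F (z i) - q ι x₀ * (y ι - x₀ ι)‖
          = ‖(F (z (i+1)) - q ι x₀ * (y ι)) - (F (z i) - q ι x₀ * (x₀ ι))‖ := by ring_nf
        _ ≤ ε * ‖y ι - x₀ ι‖ := hmvt
        _ ≤ ε * ‖y - x₀‖ := by
            apply mul_le_mul_of_nonneg_left _ (le_of_lt hε)
            have := norm_le_pi_norm (y - x₀) ι
            simpa using this
    -- assemble
    calc ‖F y - F x₀ - L x₀ (y - x₀)‖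
        = ‖∑ i ∈ Finset.range n, (F (z (i+1)) - F (z i) -
            (fun i : ℕ => if h : i < n then q ⟨i, h⟩ x₀ * (y ⟨i, h⟩ - x₀ ⟨i, h⟩) else 0) i)‖ := by
          rw [htel, hLsum, ← Finset.sum_sub_distrib]
      _ ≤ ∑ i ∈ Finset.range n, ‖F (z (i+1)) - F (z i) -
            (fun i : ℕ => if h : i < n then q ⟨i, h⟩ x₀ * (y ⟨i, h⟩ - x₀ ⟨i, h⟩) else 0) i‖ :=
          norm_sum_le _ _
      _ ≤ ∑ i ∈ Finset.range n, ε * ‖y - x₀‖ := by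
          apply Finset.sum_le_sum
          intro i hi
          have h : i < n := Finset.mem_range.1 hi
          simp only [dif_pos h]
          exact hterm i hi h
      _ = n * (ε * ‖y - x₀‖) := by rw [Finset.sum_const, Finset.card_range]; ring
      _ ≤ c * ‖y - x₀‖ := by
          rw [hεdef]
          rw [show (n : ℝ) * (c / (n+1) * ‖y - x₀‖) = (n / (n+1)) * c * ‖y - x₀‖ by ring]
          apply mul_le_mul_of_nonneg_right _ (norm_nonneg _)
          nlinarith [norm_nonneg (y - x₀), div_le_one_of_le₀ (show (n:ℝ) ≤ n+1 by linarith)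
            (by positivity : (0:ℝ) ≤ (n:ℝ)+1), hc]
  rw [contDiff_one_iff_fderiv]
  refine ⟨fun x => (key x).differentiableAt, ?_⟩
  have : fderiv ℝ F = L := funext fun x => (key x).fderiv
  rw [this]; exact hLcont

/-- If `g` on the nonnegative orthant has continuous (one-sided at the boundary)
partial derivatives, vanishes on `{R_j = 0}`, and `∂g/∂R_k` vanishes on
`{R_k = 0}` for `k ≠ j`, then `u ↦ sign(u_j)·g(|u_1|,…,|u_n|)` is `C¹` on `ℝⁿ`. -/
theorem sign_extension_C1 (n : ℕ) (j : Fin n)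
    (g : (Fin n → ℝ) → ℝ) (pg : Fin n → (Fin n → ℝ) → ℝ)
    (O : Set (Fin n → ℝ)) (hO : O = {R : Fin n → ℝ | ∀ k, 0 ≤ R k})
    (hgcont : ContinuousOn g O)
    (hderiv : ∀ k : Fin n, ∀ R ∈ O,
      HasDerivWithinAt (fun t : ℝ => g (Function.update R k t)) (pg k R)
        (Ici 0) (R k))
    (hpgcont : ∀ k : Fin n, ContinuousOn (pg k) O)
    (hzero : ∀ R ∈ O, R j = 0 → g R = 0)
    (hvanish : ∀ k : Fin n, k ≠ j → ∀ R ∈ O, R k = 0 → pg k R = 0) :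
    ContDiff ℝ 1 (fun u : Fin n → ℝ => Real.sign (u j) * g (fun k => |u k|)) := by
  subst hO
  -- abbreviations
  set A : (Fin n → ℝ) → (Fin n → ℝ) := fun u k => |u k| with hAdef
  have hAmem : ∀ u, A u ∈ {R : Fin n → ℝ | ∀ k, 0 ≤ R k} := fun u k => abs_nonneg _
  have hAcont : Continuous A := continuous_pi fun k => (continuous_apply k).abs
  have hupd_mem : ∀ R ∈ {R : Fin n → ℝ | ∀ k, 0 ≤ R k}, ∀ (k : Fin n) (t : ℝ), 0 ≤ t →
      Function.update R k t ∈ {R : Fin n → ℝ | ∀ k, 0 ≤ R k} := by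
    intro R hR k t ht i
    rcases eq_or_ne i k with rfl | hik
    · simpa using ht
    · rw [Function.update_of_ne hik]; exact hR i
  have hupdabs : ∀ (u : Fin n → ℝ) (k : Fin n) (t : ℝ),
      (fun i => |Function.update u k t i|) = Function.update (A u) k |t| := by
    intro u k t; funext i
    rcases eq_or_ne i k with rfl | hik
    · simp
    · simp [Function.update_of_ne hik, hAdef]
  -- pg k vanishes on {R j = 0} for k ≠ j
  have hvanish2 : ∀ k : Fin n, k ≠ j → ∀ R ∈ {R : Fin n → ℝ | ∀ k, 0 ≤ R k},
      R j = 0 → pg k R = 0 := by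
    intro k hk R hR hRj
    have hRk : R k ∈ Ici (0:ℝ) := hR k
    have h2 : ∀ t ∈ Ici (0:ℝ), g (Function.update R k t) = 0 := by
      intro t ht
      exact hzero _ (hupd_mem R hR k t ht)
        (by rw [Function.update_of_ne (Ne.symm hk)]; exact hRj)
    have h3 : HasDerivWithinAt (fun t => g (Function.update R k t)) 0 (Ici 0) (R k) :=
      (hasDerivWithinAt_const (R k) (Ici 0) 0).congr (fun t ht => h2 t ht) (h2 (R k) hRk)
    have hu : UniqueDiffWithinAt ℝ (Ici (0:ℝ)) (R k) := uniqueDiffOn_Ici 0 (R k) hRk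
    have e1 := (hderiv k R hR).derivWithin hu
    have e2 := h3.derivWithin hu
    rw [← e1, e2]
  -- candidate partial derivatives
  set q : Fin n → (Fin n → ℝ) → ℝ := fun k u =>
    if k = j then pg j (A u) else Real.sign (u j) * Real.sign (u k) * pg k (A u) with hqdef
  -- continuity of q
  have hC : ∀ k, Continuous fun u => pg k (A u) :=
    fun k => (hpgcont k).comp_continuous hAcont hAmem
  have hqc : ∀ k, Continuous (q k) := by
    intro k
    rcases eq_or_ne k j with rfl | hk
    · simpa [hqdef] using hC k
    · rw [continuous_iff_continuousAt]
      intro u₀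
      by_cases h0 : u₀ j ≠ 0 ∧ u₀ k ≠ 0
      · obtain ⟨hj0, hk0⟩ := h0
        have hsj : ∀ᶠ u in nhds u₀, Real.sign (u j) = Real.sign (u₀ j) := by
          rcases lt_or_gt_of_ne hj0 with h | h
          · filter_upwards [(continuous_apply j).continuousAt (Iio_mem_nhds h)] with u hu
            rw [Real.sign_of_neg hu, Real.sign_of_neg h]
          · filter_upwards [(continuous_apply j).continuousAt (Ioi_mem_nhds h)] with u hu
            rw [Real.sign_of_pos hu, Real.sign_of_pos h]
        have hsk : ∀ᶠ u in nhds u₀, Real.sign (u k) = Real.sign (u₀ k) := by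
          rcases lt_or_gt_of_ne hk0 with h | h
          · filter_upwards [(continuous_apply k).continuousAt (Iio_mem_nhds h)] with u hu
            rw [Real.sign_of_neg hu, Real.sign_of_neg h]
          · filter_upwards [(continuous_apply k).continuousAt (Ioi_mem_nhds h)] with u hu
            rw [Real.sign_of_pos hu, Real.sign_of_pos h]
        have hcont : ContinuousAt
            (fun u => Real.sign (u₀ j) * Real.sign (u₀ k) * pg k (A u)) u₀ :=
          ((continuous_const.mul continuous_const).mul (hC k)).continuousAt
        apply hcont.congr
        filter_upwards [hsj, hsk] with u h1 h2
        simp [hqdef, hk, h1, h2]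
      · push_neg at h0
        have hval : pg k (A u₀) = 0 := by
          by_cases hj0 : u₀ j = 0
          · exact hvanish2 k hk (A u₀) (hAmem u₀) (by simp [hAdef, hj0])
          · exact hvanish k hk (A u₀) (hAmem u₀) (by simp [hAdef, h0 hj0])
        have hq0 : q k u₀ = 0 := by simp [hqdef, hk, hval]
        rw [ContinuousAt, hq0]
        apply squeeze_zero_norm (a := fun u => |pg k (A u)|)
        · intro u
          simp only [hqdef, if_neg hk, Real.norm_eq_abs, abs_mul]
          calc |Real.sign (u j)| * |Real.sign (u k)| * |pg k (A u)|
              ≤ 1 * 1 * |pg k (A u)| := by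
                apply mul_le_mul_of_nonneg_right _ (abs_nonneg _)
                exact mul_le_mul (sign_abs_le_one _) (sign_abs_le_one _) (abs_nonneg _)
                  zero_le_one
            _ = |pg k (A u)| := by ring
        · have := ((hC k).tendsto u₀)
          rw [hval] at this
          simpa using this.abs
  -- the partial derivatives
  have hdq : ∀ (k : Fin n) (u : Fin n → ℝ),
      HasDerivAt (fun t => Real.sign (Function.update u k t j) *
        g (fun i => |Function.update u k t i|)) (q k u) (u k) := by
    intro k u
    have hRmem : A u ∈ {R : Fin n → ℝ | ∀ k, 0 ≤ R k} := hAmem u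
    rcases eq_or_ne k j with rfl | hk
    · -- k = j
      set φ : ℝ → ℝ := fun s => g (Function.update (A u) k s) with hφdef
      have hφ : HasDerivWithinAt φ (pg k (A u)) (Ici 0) (|u k|) := by
        have := hderiv k (A u) hRmem
        simpa [hAdef] using this
      have Teq : (fun t => Real.sign (Function.update u k t k) *
          g (fun i => |Function.update u k t i|)) = fun t => Real.sign t * φ |t| := by
        funext t
        rw [Function.update_self, hupdabs]
      rw [Teq]
      have hqval : q k u = pg k (A u) := by simp [hqdef]
      rw [hqval]
      rcases lt_trichotomy (u k) 0 with hu | hu | hu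
      · -- u k < 0
        have hpt : |u k| = -(u k) := abs_of_neg hu
        have hAt : HasDerivAt φ (pg k (A u)) (-(u k)) :=
          (hpt ▸ hφ).hasDerivAt (Ici_mem_nhds (by linarith))
        have hneg : HasDerivAt (fun t : ℝ => -φ (-t)) (pg k (A u)) (u k) := by
          have h1 : HasDerivAt (fun t : ℝ => φ (-t)) (pg k (A u) * (-1)) (u k) := by
            have := hAt.comp (u k) (hasDerivAt_neg (u k))
            simpa [Function.comp_def] using this
          simpa [Pi.neg_def] using h1.neg
        apply hneg.congr_of_eventuallyEq
        filter_upwards [Iio_mem_nhds hu] with t ht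
        rw [Real.sign_of_neg ht, abs_of_neg ht]; ring
      · -- u k = 0
        have hφ0 : HasDerivWithinAt φ (pg k (A u)) (Ici 0) 0 := by
          rw [hu] at hφ; simpa using hφ
        have h0 : φ 0 = 0 := by
          apply hzero
          · apply hupd_mem _ hRmem _ _ le_rfl
          · simp
        rw [hu]
        exact hasDerivAt_sign_mul_comp_abs hφ0 h0
      · -- u k > 0
        have hpt : |u k| = u k := abs_of_pos hu
        have hAt : HasDerivAt φ (pg k (A u)) (u k) :=
          (hpt ▸ hφ).hasDerivAt (Ici_mem_nhds hu)
        apply hAt.congr_of_eventuallyEq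
        filter_upwards [Ioi_mem_nhds hu] with t ht
        rw [Real.sign_of_pos ht, abs_of_pos ht]; ring
    · -- k ≠ j
      set ψ : ℝ → ℝ := fun s => g (Function.update (A u) k s) with hψdef
      have hψ : HasDerivWithinAt ψ (pg k (A u)) (Ici 0) (|u k|) := by
        have := hderiv k (A u) hRmem
        simpa [hAdef] using this
      set c : ℝ := Real.sign (u j) with hcdef
      have Teq : (fun t => Real.sign (Function.update u k t j) *
          g (fun i => |Function.update u k t i|)) = fun t => c * ψ |t| := by
        funext t
        rw [Function.update_of_ne (Ne.symm hk), hupdabs]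
      rw [Teq]
      rcases lt_trichotomy (u k) 0 with hu | hu | hu
      · -- u k < 0
        have hpt : |u k| = -(u k) := abs_of_neg hu
        have hAt : HasDerivAt ψ (pg k (A u)) (-(u k)) :=
          (hpt ▸ hψ).hasDerivAt (Ici_mem_nhds (by linarith))
        have hqval : q k u = c * (pg k (A u) * (-1)) := by
          simp [hqdef, hk, Real.sign_of_neg hu, hcdef]
        rw [hqval]
        have h1 : HasDerivAt (fun t : ℝ => ψ (-t)) (pg k (A u) * (-1)) (u k) := by
          have := hAt.comp (u k) (hasDerivAt_neg (u k))
          simpa [Function.comp_def] using this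
        have h2 := h1.const_mul c
        apply h2.congr_of_eventuallyEq
        filter_upwards [Iio_mem_nhds hu] with t ht
        rw [abs_of_neg ht]
      · -- u k = 0
        have hpg0 : pg k (A u) = 0 :=
          hvanish k hk (A u) hRmem (by simp [hAdef, hu])
        have hψ0 : HasDerivWithinAt ψ 0 (Ici 0) 0 := by
          rw [hu] at hψ; rw [hpg0] at hψ; simpa using hψ
        have hqval : q k u = c * 0 := by simp [hqdef, hk, hpg0]
        rw [hqval, hu]
        exact (hasDerivAt_comp_abs hψ0).const_mul c
      · -- u k > 0
        have hpt : |u k| = u k := abs_of_pos hu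
        have hAt : HasDerivAt ψ (pg k (A u)) (u k) :=
          (hpt ▸ hψ).hasDerivAt (Ici_mem_nhds hu)
        have hqval : q k u = c * pg k (A u) := by
          simp [hqdef, hk, Real.sign_of_pos hu, hcdef]
        rw [hqval]
        have h2 := hAt.const_mul c
        apply h2.congr_of_eventuallyEq
        filter_upwards [Ioi_mem_nhds hu] with t ht
        rw [abs_of_pos ht]
  exact contDiff_one_of_partials _ q hdq hqc
end

section
/- Let f : ℂ → ℂ be S^1-equivariant (f(e^{iφ}z) = e^{iφ}f(z)) and C^1 as a real map on a neighbourhood of 0, with f(0) = 0 and df(0) invertible. Write f(R) = g(R)e^{iψ(R)} for real R > 0, with g(R) = |f(R)| > 0. Then g(R) · ψ'(R) → 0 and g'(R) → |∂f/∂u(0)| as R → 0⁺, where u = Re(z). -/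
open Set Filter

/-- For an `S¹`-equivariant `C¹` map `f : ℂ → ℂ` with `f(0) = 0` and invertible
differential at `0`, writing `f(R) = g(R)·e^{iψ(R)}` in polar form for small real
`R > 0`, one has `g(R)·ψ'(R) → 0` and `g'(R) → |∂f/∂u(0)|` as `R → 0⁺`. -/
theorem polar_derivative_limits (f : ℂ → ℂ)
    (hequiv : ∀ φ : ℝ, ∀ z : ℂ,
      f (Complex.exp (φ * Complex.I) * z) = Complex.exp (φ * Complex.I) * f z)
    (hf : ContDiffAt ℝ 1 f 0) (hf0 : f 0 = 0)
    (hinv : ∀ w : ℂ, fderiv ℝ f 0 w = 0 → w = 0)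
    (ε : ℝ) (hε : 0 < ε)
    (g ψ g' ψ' : ℝ → ℝ)
    (hgpos : ∀ R ∈ Ioo (0 : ℝ) ε, 0 < g R)
    (hgabs : ∀ R ∈ Ioo (0 : ℝ) ε, g R = ‖f R‖)
    (hpolar : ∀ R ∈ Ioo (0 : ℝ) ε,
      f R = (g R : ℂ) * Complex.exp (ψ R * Complex.I))
    (hg' : ∀ R ∈ Ioo (0 : ℝ) ε, HasDerivAt g (g' R) R)
    (hψ' : ∀ R ∈ Ioo (0 : ℝ) ε, HasDerivAt ψ (ψ' R) R) :
    Tendsto (fun R => g R * ψ' R) (nhdsWithin 0 (Ioi 0)) (nhds 0) ∧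
      Tendsto g' (nhdsWithin 0 (Ioi 0)) (nhds ‖fderiv ℝ f 0 1‖) := by
  obtain ⟨f', u, hu, hcont, hderiv⟩ := contDiffAt_one_iff.mp hf
  have h0u : (0 : ℂ) ∈ u := mem_of_mem_nhds hu
  have hA : fderiv ℝ f 0 = f' 0 := (hderiv 0 h0u).fderiv
  set a : ℂ := f' 0 1 with ha_def
  have ha : a ≠ 0 := by
    intro h
    have := hinv 1 (by rw [hA]; exact h)
    exact one_ne_zero this
  have habs : (0 : ℝ) < ‖a‖ := by
    simpa using (norm_pos_iff.mpr ha)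
  -- f(R)/R → a
  have hslope : Tendsto (fun R : ℝ => f R / (R : ℂ)) (nhdsWithin 0 (Ioi 0)) (nhds a) := by
    have hd : HasDerivAt (fun t : ℝ => f t) a 0 := by
      have h1 : HasFDerivAt (f ∘ fun t : ℝ => (t : ℂ)) ((f' 0).comp Complex.ofRealCLM) 0 :=
        HasFDerivAt.comp 0 (by simpa using hderiv 0 h0u) Complex.ofRealCLM.hasFDerivAt
      simpa [Function.comp_def] using h1.hasDerivAt
    have := hasDerivAt_iff_tendsto_slope.mp hd
    have h2 : Tendsto (slope (fun t : ℝ => f t) 0) (nhdsWithin 0 (Ioi 0)) (nhds a) :=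
      this.mono_left (nhdsWithin_mono _ (fun x hx => ne_of_gt hx))
    refine h2.congr' ?_
    filter_upwards [self_mem_nhdsWithin] with t ht
    have ht0 : (t : ℝ) ≠ 0 := ne_of_gt ht
    simp [slope, hf0, Complex.real_smul, div_eq_inv_mul]
  -- abs(f R)/R → |a|
  have hioo : ∀ᶠ R in nhdsWithin (0:ℝ) (Ioi 0), R ∈ Ioo (0:ℝ) ε := by
    refine Ioo_mem_nhdsGT_of_mem ⟨le_refl _, hε⟩
  have hgR : Tendsto (fun R : ℝ => ((g R / R : ℝ) : ℂ)) (nhdsWithin 0 (Ioi 0))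
      (nhds ((‖a‖ : ℝ) : ℂ)) := by
    have h1 : Tendsto (fun R : ℝ => ‖f R / (R : ℂ)‖) (nhdsWithin 0 (Ioi 0))
        (nhds ‖a‖) := (continuous_norm.tendsto a).comp hslope
    have h2 : Tendsto (fun R : ℝ => ((‖f R / (R : ℂ)‖ : ℝ) : ℂ))
        (nhdsWithin 0 (Ioi 0)) (nhds ((‖a‖ : ℝ) : ℂ)) :=
      (Complex.continuous_ofReal.tendsto _).comp h1
    refine h2.congr' ?_
    filter_upwards [hioo] with R hR
    have hRpos : (0:ℝ) < R := hR.1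
    rw [norm_div, Complex.norm_real, Real.norm_eq_abs, abs_of_pos hRpos, hgabs R hR]
  -- e^{iψ} → a / |a|
  have hE : Tendsto (fun R : ℝ => Complex.exp (ψ R * Complex.I)) (nhdsWithin 0 (Ioi 0))
      (nhds (a / (‖a‖ : ℝ))) := by
    have hne : ((‖a‖ : ℝ) : ℂ) ≠ 0 := by
      simp [Complex.ofReal_ne_zero, ne_of_gt habs]
    have h := hslope.div hgR hne
    refine h.congr' ?_
    filter_upwards [hioo] with R hR
    have hRpos : (0:ℝ) < R := hR.1
    have hgne : (g R : ℂ) ≠ 0 := by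
      simp [Complex.ofReal_ne_zero, ne_of_gt (hgpos R hR)]
    have hRne : ((R : ℝ) : ℂ) ≠ 0 := by
      simp [Complex.ofReal_ne_zero, ne_of_gt hRpos]
    simp only [Pi.div_apply]
    rw [hpolar R hR]
    push_cast
    field_simp
  -- derivative identity: f' R 1 = (g' R + g R ψ' R * I) * exp(ψ R * I)
  have hu' : ∀ᶠ R in nhdsWithin (0:ℝ) (Ioi 0), ((R:ℝ):ℂ) ∈ u := by
    apply mem_nhdsWithin_of_mem_nhds
    exact Complex.continuous_ofReal.continuousAt.preimage_mem_nhds (by simpa using hu)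
  have hkey : ∀ᶠ R in nhdsWithin (0:ℝ) (Ioi 0),
      ((g' R : ℂ) + (g R : ℝ) * (ψ' R : ℝ) * Complex.I) =
        f' R 1 / Complex.exp (ψ R * Complex.I) := by
    filter_upwards [hioo, hu'] with R hR hRu
    have hfd : HasDerivAt (fun t : ℝ => f t) (f' R 1) R := by
      have h1 : HasFDerivAt (f ∘ fun t : ℝ => (t : ℂ)) ((f' R).comp Complex.ofRealCLM) R :=
        HasFDerivAt.comp R (by simpa using hderiv _ hRu) Complex.ofRealCLM.hasFDerivAt
      simpa [Function.comp_def] using h1.hasDerivAt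
    have hψd : HasDerivAt (fun t : ℝ => ((ψ t : ℝ) : ℂ) * Complex.I)
        ((ψ' R : ℝ) * Complex.I) R := ((hψ' R hR).ofReal_comp).mul_const Complex.I
    have hpd : HasDerivAt (fun t : ℝ => ((g t : ℝ) : ℂ) * Complex.exp (ψ t * Complex.I))
        ((g' R : ℝ) * Complex.exp (ψ R * Complex.I) +
          (g R : ℝ) * (Complex.exp (ψ R * Complex.I) * ((ψ' R : ℝ) * Complex.I))) R :=
      ((hg' R hR).ofReal_comp).mul hψd.cexp
    have hEq : (fun t : ℝ => f t) =ᶠ[nhds R]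
        (fun t : ℝ => ((g t : ℝ) : ℂ) * Complex.exp (ψ t * Complex.I)) := by
      filter_upwards [Ioo_mem_nhds hR.1 hR.2] with t ht
      exact hpolar t ht
    have hfd' : HasDerivAt (fun t : ℝ => f t)
        ((g' R : ℝ) * Complex.exp (ψ R * Complex.I) +
          (g R : ℝ) * (Complex.exp (ψ R * Complex.I) * ((ψ' R : ℝ) * Complex.I))) R :=
      hpd.congr_of_eventuallyEq hEq
    have huniq := hfd.unique hfd'
    have hexpne : Complex.exp (ψ R * Complex.I) ≠ 0 := Complex.exp_ne_zero _
    rw [huniq]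
    field_simp
  -- the combined limit
  have hF : Tendsto (fun R : ℝ => ((g' R : ℂ) + (g R : ℝ) * (ψ' R : ℝ) * Complex.I))
      (nhdsWithin 0 (Ioi 0)) (nhds ((‖a‖ : ℝ) : ℂ)) := by
    have hne : a / ((‖a‖ : ℝ) : ℂ) ≠ 0 := by
      apply div_ne_zero ha
      simp [Complex.ofReal_ne_zero, ne_of_gt habs]
    have hf'lim : Tendsto (fun R : ℝ => f' R 1) (nhdsWithin 0 (Ioi 0)) (nhds a) := by
      have hc : ContinuousAt f' 0 := hcont.continuousAt hu
      have hof : Tendsto (fun R : ℝ => (R : ℂ)) (nhds 0) (nhds 0) := by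
        simpa using Complex.continuous_ofReal.tendsto 0
      have h1 : Tendsto (fun R : ℝ => f' R) (nhds 0) (nhds (f' 0)) :=
        hc.tendsto.comp hof
      have h2 := ((ContinuousLinearMap.apply ℝ ℂ (1 : ℂ)).continuous.tendsto _).comp h1
      exact (h2.mono_left nhdsWithin_le_nhds)
    have h := hf'lim.div hE hne
    have hval : a / (a / ((‖a‖ : ℝ) : ℂ)) = ((‖a‖ : ℝ) : ℂ) := by
      field_simp
    rw [hval] at h
    refine Tendsto.congr' ?_ h
    filter_upwards [hkey] with R hR
    simp only [Pi.div_apply]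
    rw [hR]
  constructor
  · have := (Complex.continuous_im.tendsto _).comp hF
    simpa [Function.comp_def] using this
  · have := (Complex.continuous_re.tendsto _).comp hF
    have hnorm : ‖fderiv ℝ f 0 1‖ = ‖a‖ := by
      simp only [hA, ha_def]
    rw [hnorm]
    simpa [Function.comp_def] using this
end
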